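/- arXiv:math-ph/0703033 — 2 statements merged into one kernel-verified Lean document; each statement's English description precedes it below -/
import Mathlib

section
/- For fixed x ∈ R and c > 0, the sequence of functions f_n(x) = C_n (c^2 n - x^2)^{(n-2)/2} 1_{|x| ≤ c√n}, where C_n is chosen so that f_n is a probability density, converges pointwise as n → ∞ to the Gaussian density (1/(c√(2π))) exp(-x^2/(2c^2)). -/
open Real Filter MeasureTheory Topology

private lemma aux_real_tendsto (s : ℝ) :
    Tendsto (fun m : ℝ => (1 + s / m) ^ (m - 1)) atTop (𝓝 (Real.exp s)) := by
  have h1 := Real.tendsto_one_add_div_rpow_exp s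
  have h2 : Tendsto (fun m : ℝ => 1 + s / m) atTop (𝓝 1) := by
    simpa [div_eq_mul_inv] using (tendsto_inv_atTop_zero.const_mul s).const_add 1
  have h3 : Tendsto (fun m : ℝ => (1 + s / m) ^ m / (1 + s / m)) atTop
      (𝓝 (Real.exp s / 1)) := h1.div h2 one_ne_zero
  rw [div_one] at h3
  refine h3.congr' ?_
  filter_upwards [eventually_ge_atTop (|s| + 1)] with m hm
  have hm0 : 0 < m := lt_of_lt_of_le (by positivity) hm
  have habs : |s / m| < 1 := by
    rw [abs_div, abs_of_pos hm0, div_lt_one hm0]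
    linarith [abs_nonneg s]
  have hpos : 0 < 1 + s / m := by
    have := neg_lt_of_abs_lt habs
    linarith
  rw [Real.rpow_sub hpos, Real.rpow_one]

private lemma aux_nat_tendsto (s : ℝ) :
    Tendsto (fun n : ℕ => (1 + s / ((n : ℝ) / 2)) ^ (((n : ℝ) - 2) / 2)) atTop
      (𝓝 (Real.exp s)) := by
  have hcomp : Tendsto (fun n : ℕ => (n : ℝ) / 2) atTop atTop :=
    tendsto_natCast_atTop_atTop.atTop_div_const (by norm_num)
  have := (aux_real_tendsto s).comp hcomp
  refine this.congr fun n => ?_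
  simp only [Function.comp]
  congr 1
  ring

/-- The normalized densities of the first coordinate of the uniform measure on the
sphere of radius `c\u221an` converge pointwise to the Gaussian density of variance `c\u00b2`. -/
theorem sphere_marginal_density_tendsto_gaussian (c : ℝ) (hc : 0 < c)
    (C : ℕ → ℝ)
    (f : ℕ → ℝ → ℝ)
    (hf : ∀ n x, f n x =
      if |x| ≤ c * Real.sqrt n then C n * (c ^ 2 * n - x ^ 2) ^ (((n : ℝ) - 2) / 2) else 0)
    (hprob : ∀ n, 2 ≤ n → ∫ x, f n x = 1) :
    ∀ x : ℝ, Tendsto (fun n => f n x) atTop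
      (nhds ((1 / (c * Real.sqrt (2 * π))) * Real.exp (-x ^ 2 / (2 * c ^ 2)))) := by
  have hc2 : (0 : ℝ) < c ^ 2 := by positivity
  set g : ℕ → ℝ → ℝ := fun n x =>
    if |x| ≤ c * Real.sqrt n then (1 - x ^ 2 / (c ^ 2 * n)) ^ (((n : ℝ) - 2) / 2) else 0
    with hg_def
  have hcond : ∀ (n : ℕ) (x : ℝ), |x| ≤ c * Real.sqrt n ↔ x ^ 2 ≤ c ^ 2 * n := by
    intro n x
    constructor
    · intro h
      have := mul_self_le_mul_self (abs_nonneg x) h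
      calc x ^ 2 = |x| * |x| := by rw [← sq_abs, sq]
        _ ≤ (c * Real.sqrt n) * (c * Real.sqrt n) := this
        _ = c ^ 2 * n := by
            rw [show (c * Real.sqrt n) * (c * Real.sqrt n)
              = c ^ 2 * (Real.sqrt n * Real.sqrt n) by ring,
              Real.mul_self_sqrt (Nat.cast_nonneg n)]
    · intro h
      have hx : |x| = Real.sqrt (x ^ 2) := (Real.sqrt_sq_eq_abs x).symm
      rw [hx, show c * Real.sqrt n = Real.sqrt (c ^ 2 * n) by
        rw [Real.sqrt_mul (le_of_lt hc2), Real.sqrt_sq hc.le]]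
      exact Real.sqrt_le_sqrt h
  set A : ℕ → ℝ := fun n => C n * (c ^ 2 * n) ^ (((n : ℝ) - 2) / 2) with hA_def
  have hfg : ∀ n : ℕ, 1 ≤ n → ∀ x, f n x = A n * g n x := by
    intro n hn x
    rw [hf]
    by_cases hx : |x| ≤ c * Real.sqrt n
    · rw [if_pos hx]
      simp only [hg_def, if_pos hx, hA_def]
      have hn0 : (0 : ℝ) < (n : ℝ) := by exact_mod_cast hn
      have hcn : (0 : ℝ) < c ^ 2 * n := by positivity
      have hx2 : x ^ 2 ≤ c ^ 2 * n := (hcond n x).mp hx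
      have hbase : (0 : ℝ) ≤ 1 - x ^ 2 / (c ^ 2 * n) := by
        rw [sub_nonneg, div_le_one hcn]; exact hx2
      have key : c ^ 2 * n - x ^ 2 = (c ^ 2 * n) * (1 - x ^ 2 / (c ^ 2 * n)) := by
        field_simp
      rw [key, Real.mul_rpow hcn.le hbase]
      ring
    · simp only [hg_def, if_neg hx, mul_zero]
  have hgx : ∀ x : ℝ, Tendsto (fun n => g n x) atTop
      (𝓝 (Real.exp (-x ^ 2 / (2 * c ^ 2)))) := by
    intro x
    have hev : ∀ᶠ n : ℕ in atTop, x ^ 2 ≤ c ^ 2 * n ∧ 1 ≤ n := by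
      filter_upwards [eventually_ge_atTop (⌈ x ^ 2 / c ^ 2⌉₊ + 1)] with n hn
      constructor
      · have h1 : x ^ 2 / c ^ 2 ≤ (⌈ x ^ 2 / c ^ 2⌉₊ : ℝ) := Nat.le_ceil _
        have h2 : ((⌈ x ^ 2 / c ^ 2⌉₊ : ℕ) : ℝ) ≤ (n : ℝ) := by
          exact_mod_cast Nat.le_of_succ_le hn
        have h3 := (div_le_iff₀ hc2).mp (h1.trans h2)
        linarith [h3]
      · omega
    have h := aux_nat_tendsto (-x ^ 2 / (2 * c ^ 2))
    refine h.congr' ?_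
    filter_upwards [hev] with n hn
    have hn0 : (0 : ℝ) < (n : ℝ) := by exact_mod_cast hn.2
    have hbase : 1 + (-x ^ 2 / (2 * c ^ 2)) / ((n : ℝ) / 2) = 1 - x ^ 2 / (c ^ 2 * n) := by
      field_simp; ring
    rw [hbase, hg_def]
    simp only [if_pos ((hcond n x).mpr hn.1)]
  have hgm : ∀ n : ℕ, Measurable (g n) := by
    intro n
    apply Measurable.ite
    · exact measurableSet_le (by fun_prop) measurable_const
    · fun_prop
    · exact measurable_const
  set bnd : ℝ → ℝ := fun x => Real.exp (-(1 / (4 * c ^ 2)) * x ^ 2) with hbnd_def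
  have hbnd_int : Integrable bnd := integrable_exp_neg_mul_sq (by positivity)
  have hgbnd : ∀ n : ℕ, 4 ≤ n → ∀ x, |g n x| ≤ bnd x := by
    intro n hn x
    have hbp : 0 < bnd x := Real.exp_pos _
    by_cases hx : |x| ≤ c * Real.sqrt n
    · have hn0 : (0 : ℝ) < (n : ℝ) := by
        have : (4 : ℝ) ≤ (n : ℝ) := by exact_mod_cast hn
        linarith
      have hcn : (0 : ℝ) < c ^ 2 * n := by positivity
      have hx2 : x ^ 2 ≤ c ^ 2 * n := (hcond n x).mp hx
      have hbase : (0 : ℝ) ≤ 1 - x ^ 2 / (c ^ 2 * n) := by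
        rw [sub_nonneg, div_le_one hcn]; exact hx2
      have hexp : (0 : ℝ) ≤ ((n : ℝ) - 2) / 2 := by
        have : (4 : ℝ) ≤ (n : ℝ) := by exact_mod_cast hn
        linarith
      simp only [hg_def, if_pos hx]
      rw [abs_of_nonneg (Real.rpow_nonneg hbase _)]
      have h1 : 1 - x ^ 2 / (c ^ 2 * n) ≤ Real.exp (-(x ^ 2 / (c ^ 2 * n))) := by
        have := Real.add_one_le_exp (-(x ^ 2 / (c ^ 2 * n)))
        linarith
      calc (1 - x ^ 2 / (c ^ 2 * n)) ^ (((n : ℝ) - 2) / 2)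
          ≤ (Real.exp (-(x ^ 2 / (c ^ 2 * n)))) ^ (((n : ℝ) - 2) / 2) :=
            Real.rpow_le_rpow hbase h1 hexp
        _ = Real.exp (-(x ^ 2 / (c ^ 2 * n)) * (((n : ℝ) - 2) / 2)) := by
            rw [← Real.exp_mul]
        _ ≤ bnd x := by
            rw [hbnd_def]
            apply Real.exp_le_exp.mpr
            have h4 : (4 : ℝ) ≤ (n : ℝ) := by exact_mod_cast hn
            have key : (1 / (4 * c ^ 2)) * x ^ 2 ≤ x ^ 2 * ((n : ℝ) - 2) / (2 * (c ^ 2 * n)) := by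
              rw [div_mul_eq_mul_div, div_le_div_iff₀ (by positivity) (by positivity)]
              nlinarith [mul_nonneg (mul_nonneg hc2.le (sq_nonneg x)) (sub_nonneg.mpr h4)]
            have key2 : (1 / (4 * c ^ 2)) * x ^ 2
                ≤ x ^ 2 / (c ^ 2 * n) * (((n : ℝ) - 2) / 2) := by
              rw [div_mul_eq_mul_div, div_mul_div_comm,
                div_le_div_iff₀ (by positivity) (by positivity)]
              nlinarith [mul_nonneg (mul_nonneg hc2.le (sq_nonneg x)) (sub_nonneg.mpr h4)]
            nlinarith [key2]
    · simp only [hg_def, if_neg hx, abs_zero]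
      exact hbp.le
  have hlim_int : ∫ x, Real.exp (-x ^ 2 / (2 * c ^ 2)) = c * Real.sqrt (2 * π) := by
    have h1 : ∀ x : ℝ, -x ^ 2 / (2 * c ^ 2) = -(1 / (2 * c ^ 2)) * x ^ 2 := fun x => by ring
    simp_rw [h1, integral_gaussian]
    rw [show π / (1 / (2 * c ^ 2)) = 2 * π * c ^ 2 by field_simp,
      Real.sqrt_mul (by positivity), Real.sqrt_sq hc.le]
    ring
  have hI : Tendsto (fun n => ∫ x, g n x) atTop (𝓝 (c * Real.sqrt (2 * π))) := by
    rw [← tendsto_add_atTop_iff_nat 4, ← hlim_int]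
    apply tendsto_integral_of_dominated_convergence bnd
    · exact fun n => ((hgm (n + 4)).aestronglyMeasurable)
    · exact hbnd_int
    · intro n
      exact Eventually.of_forall fun x => by
        simpa [Real.norm_eq_abs] using hgbnd (n + 4) (by omega) x
    · exact Eventually.of_forall fun x => (hgx x).comp (tendsto_add_atTop_nat 4)
  have hAeq : ∀ n : ℕ, 2 ≤ n → A n * ∫ x, g n x = 1 := by
    intro n hn
    have hp := hprob n hn
    rw [show (∫ x, f n x) = ∫ x, A n * g n x from
      integral_congr_ae (Eventually.of_forall fun x => hfg n (by omega) x)] at hp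
    rwa [MeasureTheory.integral_const_mul] at hp
  have hL : (c * Real.sqrt (2 * π)) ≠ 0 := by positivity
  have hA : Tendsto A atTop (𝓝 (c * Real.sqrt (2 * π))⁻¹) := by
    refine (hI.inv₀ hL).congr' ?_
    filter_upwards [eventually_ge_atTop 2] with n hn
    have h1 := hAeq n hn
    have h2 : (∫ x, g n x) ≠ 0 := by
      intro h; rw [h, mul_zero] at h1; exact zero_ne_one h1
    field_simp
    linarith [h1]
  intro x
  have final : Tendsto (fun n => A n * g n x) atTop
      (𝓝 ((c * Real.sqrt (2 * π))⁻¹ * Real.exp (-x ^ 2 / (2 * c ^ 2)))) :=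
    hA.mul (hgx x)
  rw [show (1 : ℝ) / (c * Real.sqrt (2 * π)) = (c * Real.sqrt (2 * π))⁻¹ from one_div _]
  refine final.congr' ?_
  filter_upwards [eventually_ge_atTop 1] with n hn
  exact (hfg n hn x).symm
end

section
/- For the finite-dimensional measure L_{1,ξ} on (0,∞)^n with density ∏_k x_k^{m_k - 1}/Γ(m_k) (θ = 1, ∑ m_k = 1), the pushforward under the coordinatewise multiplication map x ↦ (a_1 x_1, ..., a_n x_n) with a_k > 0 and ∑_k m_k log a_k = 0 equals L_{1,ξ} itself. -/
open MeasureTheory Finset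
open scoped ENNReal

lemma aux_map_withDensity {α β : Type*} [MeasurableSpace α] [MeasurableSpace β]
    (e : α ≃ᵐ β) (μ : Measure α) {f : α → ℝ≥0∞} (hf : Measurable f) :
    (μ.withDensity f).map e = (μ.map e).withDensity (fun y => f (e.symm y)) := by
  ext s hs
  rw [Measure.map_apply e.measurable hs, withDensity_apply _ (e.measurable hs),
    withDensity_apply _ hs,
    setLIntegral_map (f := fun y => f (e.symm y)) hs (hf.comp e.symm.measurable) e.measurable]
  simp

/-- Finite-dimensional invariance of the infinite-dimensional Lebesgue measure under the
multiplier group: the sigma-finite measure `L_{1,ξ}` on `(0,∞)^n` with density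
`∏ x_k^{m_k-1}/Γ(m_k)` (`∑ m_k = 1`) is invariant under the coordinatewise
multiplication `x ↦ (a₁x₁,…,aₙxₙ)` whenever `a_k > 0` and `∑ m_k log a_k = 0`. -/
theorem finite_dim_lebesgue_multiplier_invariance (n : ℕ)
    (m : Fin n → ℝ) (hm : ∀ k, 0 < m k) (hm1 : (∑ k, m k) = 1)
    (a : Fin n → ℝ) (ha : ∀ k, 0 < a k) (ha0 : (∑ k, m k * Real.log (a k)) = 0)
    (L : Measure (Fin n → ℝ))
    (hL : L = volume.withDensity (fun x =>
      Set.indicator (Set.univ.pi fun _ : Fin n => Set.Ioi (0:ℝ))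
        (fun x => ENNReal.ofReal (∏ k, (x k) ^ (m k - 1) / Real.Gamma (m k))) x)) :
    Measure.map (fun x k => a k * x k) L = L := by
  classical
  subst hL
  set S : Set (Fin n → ℝ) := Set.univ.pi fun _ : Fin n => Set.Ioi (0:ℝ) with hSdef
  set F : (Fin n → ℝ) → ℝ≥0∞ := fun x =>
    S.indicator (fun x => ENNReal.ofReal (∏ k, (x k) ^ (m k - 1) / Real.Gamma (m k))) x
    with hFdef
  have hSmeas : MeasurableSet S := MeasurableSet.univ_pi fun _ => measurableSet_Ioi
  have hFmeas : Measurable F := by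
    apply Measurable.indicator _ hSmeas
    fun_prop
  -- the measurable equivalence
  let e : (Fin n → ℝ) ≃ᵐ (Fin n → ℝ) :=
    { toEquiv :=
      { toFun := fun x k => a k * x k
        invFun := fun y k => (a k)⁻¹ * y k
        left_inv := fun x => funext fun k => by
          have h := (ha k).ne'
          field_simp
        right_inv := fun y => funext fun k => by
          have h := (ha k).ne'
          field_simp }
      measurable_toFun := measurable_pi_lambda _ fun k => (measurable_pi_apply k).const_mul _
      measurable_invFun := measurable_pi_lambda _ fun k => (measurable_pi_apply k).const_mul _ }
  -- image of Lebesgue measure under the linear map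
  have hprodpos : (0:ℝ) < ∏ k, a k := Finset.prod_pos fun k _ => ha k
  have hmapvol : Measure.map (fun x k => a k * x k) (volume : Measure (Fin n → ℝ)) =
      ENNReal.ofReal ((∏ k, a k)⁻¹) • volume := by
    have hTl : ⇑(Matrix.toLin' (Matrix.diagonal a)) = fun (x : Fin n → ℝ) k => a k * x k := by
      funext x k
      simp [Matrix.toLin'_apply, Matrix.mulVec_diagonal]
    have hdet : LinearMap.det (Matrix.toLin' (Matrix.diagonal a)) = ∏ k, a k := by
      rw [LinearMap.det_toLin', Matrix.det_diagonal]
    have h := Real.map_linearMap_volume_pi_eq_smul_volume_pi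
      (f := Matrix.toLin' (Matrix.diagonal a)) (by rw [hdet]; exact hprodpos.ne')
    rw [hdet, hTl, abs_of_pos (inv_pos.2 hprodpos)] at h
    exact h
  -- the key scalar identity
  have key : (∏ k, a k)⁻¹ * ∏ k, ((a k)⁻¹) ^ (m k - 1) = 1 := by
    rw [← Finset.prod_inv_distrib, ← Finset.prod_mul_distrib]
    have hk : ∀ k, (a k)⁻¹ * ((a k)⁻¹) ^ (m k - 1)
        = Real.exp (-(m k * Real.log (a k))) := fun k => by
      rw [Real.inv_rpow (ha k).le, ← Real.rpow_neg (ha k).le, ← Real.rpow_neg_one (a k),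
        ← Real.rpow_add (ha k), Real.rpow_def_of_pos (ha k)]
      congr 1
      ring
    calc (∏ k, (a k)⁻¹ * ((a k)⁻¹) ^ (m k - 1))
        = ∏ k, Real.exp (-(m k * Real.log (a k))) :=
          Finset.prod_congr rfl fun k _ => hk k
      _ = Real.exp (∑ k, -(m k * Real.log (a k))) := (Real.exp_sum _ _).symm
      _ = 1 := by rw [Finset.sum_neg_distrib, ha0, neg_zero, Real.exp_zero]
  -- pointwise identity for the transformed density
  have hpoint : ∀ x, ENNReal.ofReal ((∏ k, a k)⁻¹) * F (fun k => (a k)⁻¹ * x k) = F x := by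
    intro x
    by_cases hx : x ∈ S
    · have hx' : (fun k => (a k)⁻¹ * x k) ∈ S := by
        intro k _
        exact mul_pos (inv_pos.2 (ha k)) (hx k (Set.mem_univ k))
      have hxk : ∀ k, 0 < x k := fun k => hx k (Set.mem_univ k)
      rw [hFdef]
      simp only [Set.indicator_of_mem hx, Set.indicator_of_mem hx']
      rw [← ENNReal.ofReal_mul (inv_pos.2 hprodpos).le]
      congr 1
      have hsplit : ∀ k, ((a k)⁻¹ * x k) ^ (m k - 1) / Real.Gamma (m k)
          = ((a k)⁻¹) ^ (m k - 1) * ((x k) ^ (m k - 1) / Real.Gamma (m k)) := fun k => by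
        rw [Real.mul_rpow (inv_pos.2 (ha k)).le (hxk k).le]
        ring
      rw [Finset.prod_congr rfl fun k _ => hsplit k, Finset.prod_mul_distrib, ← mul_assoc,
        key, one_mul]
    · have hx' : (fun k => (a k)⁻¹ * x k) ∉ S := by
        intro hmem
        apply hx
        intro k _
        have := hmem k (Set.mem_univ k)
        have : 0 < a k * ((a k)⁻¹ * x k) := mul_pos (ha k) this
        rwa [← mul_assoc, mul_inv_cancel₀ (ha k).ne', one_mul] at this
      rw [hFdef]
      simp only [Set.indicator_of_notMem hx, Set.indicator_of_notMem hx', mul_zero]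
  -- assemble
  have hcoe : ⇑e = fun x k => a k * x k := rfl
  have hcoe' : (fun y => F (e.symm y)) = fun y => F (fun k => (a k)⁻¹ * y k) := rfl
  have hmap := aux_map_withDensity e volume hFmeas
  rw [hcoe, hcoe'] at hmap
  rw [hmap, hmapvol, withDensity_smul_measure,
    ← withDensity_smul' _ _ ENNReal.ofReal_ne_top]
  congr 1
  funext x
  simpa [smul_eq_mul] using hpoint x
end
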